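/- Let A, B ⊂ ℝⁿ be convex compacta such that the Minkowski sum A + B is uniformly convex with modulus of convexity δ_{A+B}. Let 𝒞 be a grid with step Δ ∈ (0,1/2) and suppose ε_Δ ∈ (0, diam(A+B)) satisfies δ_{A+B}(ε_Δ)/ε_Δ = Δ/(4 − Δ²). Let Â, B̂, and \widehat{A+B} be the external polyhedral approximations on 𝒞 of A, B, and A + B, respectively. Then h(Â + B̂, \widehat{A+B}) ≤ (8/7)·ε_Δ·Δ. -/

import Mathlib

open Set Metric Pointwise

/-- Supporting function `s(p, A) = sup_{x ∈ A} ⟪p, x⟫`. -/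
noncomputable def suppF {n : ℕ} (p : EuclideanSpace ℝ (Fin n))
    (A : Set (EuclideanSpace ℝ (Fin n))) : ℝ :=
  sSup ((fun x => (inner ℝ p x : ℝ)) '' A)

/-- Modulus of convexity of a set `A`. -/
noncomputable def modConv {n : ℕ} (A : Set (EuclideanSpace ℝ (Fin n))) (ε : ℝ) : ℝ :=
  sSup {δ : ℝ | 0 ≤ δ ∧ ∀ x₁ ∈ A, ∀ x₂ ∈ A, ‖x₁ - x₂‖ = ε →
    Metric.closedBall (midpoint ℝ x₁ x₂) δ ⊆ A}

/-- `A` is uniformly convex: its modulus of convexity is positive on `(0, diam A)`. -/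
def UnifConvex {n : ℕ} (A : Set (EuclideanSpace ℝ (Fin n))) : Prop :=
  ∀ ε : ℝ, 0 < ε → ε < Metric.diam A → 0 < modConv A ε

/-- `C` is a grid with step `Δ`: a finite set of unit vectors such that every nonzero `p`
whose normalization is not in `C` is a positive combination of grid vectors that are
pairwise `Δ`-close. -/
def IsGrid {n : ℕ} (C : Finset (EuclideanSpace ℝ (Fin n))) (Δ : ℝ) : Prop :=
  (∀ p ∈ C, ‖p‖ = 1) ∧
  ∀ p : EuclideanSpace ℝ (Fin n), p ≠ 0 → ‖p‖⁻¹ • p ∉ C →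
    ∃ (k : ℕ) (q : Fin k → EuclideanSpace ℝ (Fin n)) (α : Fin k → ℝ),
      (∀ i, q i ∈ C) ∧ (∀ i, 0 < α i) ∧ p = ∑ i, α i • q i ∧
      ∀ i j, ‖q i - q j‖ < Δ

/-- External polyhedral approximation of `A` on the grid `C`. -/
def polyApprox {n : ℕ} (C : Finset (EuclideanSpace ℝ (Fin n)))
    (A : Set (EuclideanSpace ℝ (Fin n))) : Set (EuclideanSpace ℝ (Fin n)) :=
  {x | ∀ p ∈ C, (inner ℝ p x : ℝ) ≤ suppF p A}

/-- Geometric (Minkowski–Pontryagin) difference `B ⊖ A = {x | x + A ⊆ B}`. -/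
def geomDiff {n : ℕ} (B A : Set (EuclideanSpace ℝ (Fin n))) :
    Set (EuclideanSpace ℝ (Fin n)) :=
  {x | ∀ a ∈ A, x + a ∈ B}

section aux
variable {n : ℕ}

lemma contInner (p : EuclideanSpace ℝ (Fin n)) :
    Continuous fun x : EuclideanSpace ℝ (Fin n) => (inner ℝ p x : ℝ) :=
  Continuous.inner continuous_const continuous_id

lemma bddAbove_img {p : EuclideanSpace ℝ (Fin n)} {A : Set (EuclideanSpace ℝ (Fin n))}
    (hA : IsCompact A) : BddAbove ((fun x => (inner ℝ p x : ℝ)) '' A) :=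
  (hA.image (contInner p)).bddAbove

lemma le_suppF {p : EuclideanSpace ℝ (Fin n)} {A : Set (EuclideanSpace ℝ (Fin n))}
    (hA : IsCompact A) {a : EuclideanSpace ℝ (Fin n)} (ha : a ∈ A) :
    (inner ℝ p a : ℝ) ≤ suppF p A :=
  le_csSup (bddAbove_img hA) ⟨a, ha, rfl⟩

lemma suppF_le {p : EuclideanSpace ℝ (Fin n)} {A : Set (EuclideanSpace ℝ (Fin n))}
    (hne : A.Nonempty) {c : ℝ} (h : ∀ a ∈ A, (inner ℝ p a : ℝ) ≤ c) : suppF p A ≤ c :=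
  csSup_le (hne.image _) (by rintro _ ⟨a, ha, rfl⟩; exact h a ha)

lemma suppF_add {p : EuclideanSpace ℝ (Fin n)} {A B : Set (EuclideanSpace ℝ (Fin n))}
    (hA : IsCompact A) (hB : IsCompact B) (hAne : A.Nonempty) (hBne : B.Nonempty) :
    suppF p A + suppF p B ≤ suppF p (A + B) := by
  have h : ∀ a ∈ A, ∀ b ∈ B, (inner ℝ p a : ℝ) + inner ℝ p b ≤ suppF p (A + B) := by
    intro a ha b hb
    have := le_suppF (p := p) (hA.add hB) (add_mem_add ha hb)
    rwa [inner_add_right] at this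
  have h1 : suppF p A ≤ suppF p (A + B) - suppF p B := by
    refine suppF_le hAne fun a ha => ?_
    have h2 : suppF p B ≤ suppF p (A + B) - inner ℝ p a :=
      suppF_le hBne fun b hb => by linarith [h a ha b hb]
    linarith
  linarith

lemma mid_mem {A : Set (EuclideanSpace ℝ (Fin n))} (hconv : Convex ℝ A)
    {x₁ x₂ : EuclideanSpace ℝ (Fin n)} (h₁ : x₁ ∈ A) (h₂ : x₂ ∈ A) :
    midpoint ℝ x₁ x₂ ∈ A :=
  hconv.segment_subset h₁ h₂ (midpoint_mem_segment x₁ x₂)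

lemma closedBall_modConv_subset {A : Set (EuclideanSpace ℝ (Fin n))}
    (hcl : IsClosed A) (hconv : Convex ℝ A) (hbd : Bornology.IsBounded A)
    {x₁ x₂ : EuclideanSpace ℝ (Fin n)} (h₁ : x₁ ∈ A) (h₂ : x₂ ∈ A)
    {ε : ℝ} (hd : ‖x₁ - x₂‖ = ε) (hε : 0 < ε) :
    Metric.closedBall (midpoint ℝ x₁ x₂) (modConv A ε) ⊆ A := by
  set D := {δ : ℝ | 0 ≤ δ ∧ ∀ y₁ ∈ A, ∀ y₂ ∈ A, ‖y₁ - y₂‖ = ε →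
    Metric.closedBall (midpoint ℝ y₁ y₂) δ ⊆ A} with hD
  set m := midpoint ℝ x₁ x₂ with hm
  have hmA : m ∈ A := mid_mem hconv h₁ h₂
  have hD0 : (0 : ℝ) ∈ D := by
    refine ⟨le_refl 0, fun y₁ hy₁ y₂ hy₂ _ => ?_⟩
    intro z hz
    rw [Metric.closedBall_zero, Set.mem_singleton_iff] at hz
    rw [hz]; exact mid_mem hconv hy₁ hy₂
  have hDne : D.Nonempty := ⟨0, hD0⟩
  have hvne : x₁ - x₂ ≠ 0 := by
    intro h; rw [h, norm_zero] at hd; linarith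
  have hDbdd : BddAbove D := by
    refine ⟨Metric.diam A, fun δ hδ => ?_⟩
    have hu : ‖(‖x₁ - x₂‖⁻¹ • (x₁ - x₂) : EuclideanSpace ℝ (Fin n))‖ = 1 :=
      norm_smul_inv_norm hvne
    have hde : dist (m + δ • (‖x₁ - x₂‖⁻¹ • (x₁ - x₂))) m = δ := by
      rw [dist_self_add_left, norm_smul, hu, mul_one, Real.norm_eq_abs,
        abs_of_nonneg hδ.1]
    have hw : m + δ • (‖x₁ - x₂‖⁻¹ • (x₁ - x₂)) ∈ A := by
      apply hδ.2 x₁ h₁ x₂ h₂ hd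
      rw [Metric.mem_closedBall, hde]
    calc δ = dist (m + δ • (‖x₁ - x₂‖⁻¹ • (x₁ - x₂))) m := hde.symm
      _ ≤ Metric.diam A := Metric.dist_le_diam_of_mem hbd hw hmA
  set r := modConv A ε with hr
  intro z hz
  rw [Metric.mem_closedBall] at hz
  rcases le_or_gt r 0 with hr0 | hr0
  · have hz0 : dist z m = 0 := le_antisymm (hz.trans hr0) dist_nonneg
    rw [dist_eq_zero.mp hz0]; exact hmA
  · have hclosure : z ∈ closure A := by
      rw [Metric.mem_closure_iff]
      intro η hη
      rcases eq_or_ne (dist z m) 0 with hd0 | hd0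
      · refine ⟨m, hmA, ?_⟩; rw [hd0]; exact hη
      · have hdpos : 0 < dist z m := lt_of_le_of_ne dist_nonneg (Ne.symm hd0)
        set d := dist z m with hdd
        set t : ℝ := max (1 - η / (2 * d)) (1/2) with htdef
        have ht0 : 0 < t := lt_of_lt_of_le (by norm_num) (le_max_right _ _)
        have ht1 : t < 1 := by
          apply max_lt
          · have : 0 < η / (2 * d) := by positivity
            linarith
          · norm_num
        have htd : t * d < r := by
          calc t * d ≤ t * r := by nlinarith [hz]
            _ < r := by nlinarith
        obtain ⟨δ, hδD, hδgt⟩ := exists_lt_of_lt_csSup hDne htd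
        set zt := m + t • (z - m) with hzt
        have hztA : zt ∈ A := by
          apply hδD.2 x₁ h₁ x₂ h₂ hd
          rw [Metric.mem_closedBall, hzt]
          have heq1 : dist (m + t • (z - m)) m = t * d := by
            rw [dist_self_add_left, norm_smul, Real.norm_eq_abs, abs_of_nonneg ht0.le,
              hdd, dist_eq_norm]
          rw [heq1]; exact hδgt.le
        refine ⟨zt, hztA, ?_⟩
        have hdzzt : dist z zt = (1 - t) * d := by
          rw [hzt, dist_eq_norm]
          have heq2 : z - (m + t • (z - m)) = (1 - t) • (z - m) := by module
          rw [heq2, norm_smul, Real.norm_eq_abs, abs_of_nonneg (by linarith), hdd,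
            dist_eq_norm]
        rw [hdzzt]
        have h1t : 1 - η / (2 * d) ≤ t := le_max_left _ _
        have : (1 - t) * d ≤ (η / (2 * d)) * d := by nlinarith
        have heq3 : (η / (2 * d)) * d = η / 2 := by field_simp
        linarith [heq3 ▸ this]
    rwa [hcl.closure_eq] at hclosure

lemma dist_maximizers_le {A : Set (EuclideanSpace ℝ (Fin n))} (hconv : Convex ℝ A)
    {q₁ q₂ x₁ x₂ : EuclideanSpace ℝ (Fin n)} {Δ εΔ r : ℝ}
    (hq₁ : ‖q₁‖ = 1) (hq₂ : ‖q₂‖ = 1) (hqd : ‖q₁ - q₂‖ < Δ)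
    (hx₁ : x₁ ∈ A) (hx₂ : x₂ ∈ A)
    (hm₁ : ∀ y ∈ A, (inner ℝ q₁ y : ℝ) ≤ inner ℝ q₁ x₁)
    (hm₂ : ∀ y ∈ A, (inner ℝ q₂ y : ℝ) ≤ inner ℝ q₂ x₂)
    (hε : 0 < εΔ) (hΔ0 : 0 < Δ) (hrlow : Δ * εΔ / 4 < r)
    (hball : ∀ y₁ ∈ A, ∀ y₂ ∈ A, ‖y₁ - y₂‖ = εΔ →
      Metric.closedBall (midpoint ℝ y₁ y₂) r ⊆ A) :
    dist x₁ x₂ ≤ εΔ := by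
  by_contra hlt
  push_neg at hlt
  have hr0 : 0 ≤ r := le_trans (by positivity) hrlow.le
  set ε := dist x₁ x₂ with hεdef
  have hε' : 0 < ε := hε.trans hlt
  set t := εΔ / ε with htdef
  have ht0 : 0 < t := div_pos hε hε'
  have ht1 : t < 1 := (div_lt_one hε').mpr hlt
  have htε : t * ε = εΔ := by rw [htdef]; field_simp
  have hεn : ‖x₁ - x₂‖ = ε := (dist_eq_norm _ _).symm
  clear_value t
  have H : ∀ (a b qa : EuclideanSpace ℝ (Fin n)), a ∈ A → b ∈ A → ‖a - b‖ = ε →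
      ‖qa‖ = 1 → (∀ y ∈ A, (inner ℝ qa y : ℝ) ≤ inner ℝ qa a) →
      r ≤ (t / 2) * (inner ℝ qa (a - b) : ℝ) := by
    intro a b qa ha hb hab hqa hmax
    set y := a + t • (b - a) with hy
    have hyA : y ∈ A := by
      have : y = (1 - t) • a + t • b := by rw [hy]; module
      rw [this]
      exact hconv ha hb (by linarith) ht0.le (by ring)
    have hay : ‖a - y‖ = εΔ := by
      have : a - y = t • (a - b) := by rw [hy]; module
      rw [this, norm_smul, Real.norm_eq_abs, abs_of_nonneg ht0.le, hab, htε]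
    have hmid : midpoint ℝ a y = a + (t / 2) • (b - a) := by
      rw [hy, midpoint_eq_smul_add]
      match_scalars <;> simp [invOf_eq_inv] <;> ring
    have hw : midpoint ℝ a y + r • qa ∈ A := by
      apply hball a ha y hyA hay
      rw [Metric.mem_closedBall, dist_self_add_left, norm_smul, hqa, mul_one,
        Real.norm_eq_abs, abs_of_nonneg hr0]
    have hle := hmax _ hw
    have hinner : (inner ℝ qa (midpoint ℝ a y + r • qa) : ℝ) =
        inner ℝ qa a + (t / 2) * inner ℝ qa (b - a) + r := by
      rw [hmid, inner_add_right, inner_add_right, real_inner_smul_right,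
        real_inner_smul_right, real_inner_self_eq_norm_sq, hqa]
      ring
    rw [hinner] at hle
    have : (inner ℝ qa (b - a) : ℝ) = - inner ℝ qa (a - b) := by
      rw [← inner_neg_right]; congr 1; module
    rw [this] at hle
    linarith
  have h1 := H x₁ x₂ q₁ hx₁ hx₂ hεn hq₁ hm₁
  have h2 := H x₂ x₁ q₂ hx₂ hx₁ (by rw [← neg_sub, norm_neg]; exact hεn) hq₂ hm₂
  have hsum : 2 * r ≤ (t / 2) * (inner ℝ (q₁ - q₂) (x₁ - x₂) : ℝ) := by
    have : (inner ℝ (q₁ - q₂) (x₁ - x₂) : ℝ) =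
        inner ℝ q₁ (x₁ - x₂) + inner ℝ q₂ (x₂ - x₁) := by
      rw [inner_sub_left]
      have : (inner ℝ q₂ (x₂ - x₁) : ℝ) = - inner ℝ q₂ (x₁ - x₂) := by
        rw [← inner_neg_right]; congr 1; module
      rw [this]; ring
    rw [this]; linarith
  have hcs : (inner ℝ (q₁ - q₂) (x₁ - x₂) : ℝ) ≤ ‖q₁ - q₂‖ * ε := by
    calc (inner ℝ (q₁ - q₂) (x₁ - x₂) : ℝ) ≤ ‖q₁ - q₂‖ * ‖x₁ - x₂‖ :=
          real_inner_le_norm _ _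
      _ = ‖q₁ - q₂‖ * ε := by rw [hεn]
  have hfin : 2 * r < (t / 2) * (Δ * ε) := by
    calc 2 * r ≤ (t / 2) * (inner ℝ (q₁ - q₂) (x₁ - x₂) : ℝ) := hsum
      _ ≤ (t / 2) * (‖q₁ - q₂‖ * ε) := by nlinarith [hcs]
      _ < (t / 2) * (Δ * ε) := by
          apply mul_lt_mul_of_pos_left _ (by positivity)
          exact mul_lt_mul_of_pos_right hqd hε'
  nlinarith [hfin]

end aux

/-- distance between the sum of the approximations and the approximation
of the sum. -/
theorem hausdorffDist_add_polyApprox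
    (n : ℕ) (A B : Set (EuclideanSpace ℝ (Fin n)))
    (hA : IsCompact A) (hAc : Convex ℝ A)
    (hB : IsCompact B) (hBc : Convex ℝ B)
    (huc : UnifConvex (A + B))
    (Δ εΔ : ℝ) (hΔ : Δ ∈ Set.Ioo (0 : ℝ) (1/2))
    (hεΔ : εΔ ∈ Set.Ioo 0 (Metric.diam (A + B)))
    (heq : modConv (A + B) εΔ / εΔ = Δ / (4 - Δ^2))
    (C : Finset (EuclideanSpace ℝ (Fin n))) (hC : IsGrid C Δ) :
    Metric.hausdorffDist (polyApprox C A + polyApprox C B) (polyApprox C (A + B)) ≤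
      8/7 * εΔ * Δ := by
  obtain ⟨hΔ0, hΔh⟩ := hΔ
  obtain ⟨hε0, hεd⟩ := hεΔ
  set M := A + B with hM
  set c := 8/7 * εΔ * Δ with hc
  have hc0 : 0 ≤ c := by positivity
  have hMco : IsCompact M := hA.add hB
  have hMcv : Convex ℝ M := hAc.add hBc
  have hMcl : IsClosed M := hMco.isClosed
  have hMbd : Bornology.IsBounded M := hMco.isBounded
  have hMne : M.Nonempty := by
    rcases Set.eq_empty_or_nonempty M with h | h
    · rw [h] at hεd; rw [Metric.diam_empty] at hεd; linarith
    · exact h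
  obtain ⟨z₀, hz₀⟩ := id hMne
  rw [Set.mem_add] at hz₀
  obtain ⟨a₀, ha₀, b₀, hb₀, -⟩ := hz₀
  have hAne : A.Nonempty := ⟨a₀, ha₀⟩
  have hBne : B.Nonempty := ⟨b₀, hb₀⟩
  -- the modulus value
  set r := modConv M εΔ with hrdef
  have h4Δ : 0 < 4 - Δ^2 := by nlinarith
  have hre : r = εΔ * (Δ / (4 - Δ^2)) := by
    field_simp at heq ⊢
    linarith [heq]
  have hr4 : Δ * εΔ / 4 < r := by
    rw [hre, show εΔ * (Δ / (4 - Δ^2)) = εΔ * Δ / (4 - Δ^2) by ring,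
      div_lt_div_iff₀ (by norm_num) h4Δ]
    nlinarith [mul_pos (mul_pos hΔ0 hε0) (pow_pos hΔ0 2)]
  have hball : ∀ y₁ ∈ M, ∀ y₂ ∈ M, ‖y₁ - y₂‖ = εΔ →
      Metric.closedBall (midpoint ℝ y₁ y₂) r ⊆ M := by
    intro y₁ hy₁ y₂ hy₂ hyd
    exact closedBall_modConv_subset hMcl hMcv hMbd hy₁ hy₂ hyd hε0
  -- maximizers
  have hmax : ∀ q : EuclideanSpace ℝ (Fin n), ∃ x ∈ M, ∀ y ∈ M,
      (inner ℝ q y : ℝ) ≤ inner ℝ q x := by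
    intro q
    obtain ⟨x, hxM, hx⟩ := hMco.exists_isMaxOn hMne (contInner q).continuousOn
    exact ⟨x, hxM, fun y hy => hx hy⟩
  -- the key claim
  have claim : ∀ x ∈ polyApprox C M, ∀ p : EuclideanSpace ℝ (Fin n), ‖p‖ = 1 →
      (inner ℝ p x : ℝ) ≤ suppF p M + c := by
    intro x hx p hp
    have hp0 : p ≠ 0 := fun h => by rw [h, norm_zero] at hp; norm_num at hp
    by_cases hpC : p ∈ C
    · have := hx p hpC
      linarith
    · have hpC' : ‖p‖⁻¹ • p ∉ C := by rwa [hp, inv_one, one_smul]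
      obtain ⟨k, q, α, hqC, hα, hsum, hclose⟩ := hC.2 p hp0 hpC'
      have hk : 0 < k := by
        rcases Nat.eq_zero_or_pos k with h | h
        · exfalso; apply hp0; rw [hsum]; subst h; simp
        · exact h
      set i₀ : Fin k := ⟨0, hk⟩ with hi₀
      choose X hXmem hXmax using fun i => hmax (q i)
      have hunit : ∀ i, ‖q i‖ = 1 := fun i => hC.1 _ (hqC i)
      have hdist : ∀ i, dist (X i) (X i₀) ≤ εΔ := fun i =>
        dist_maximizers_le hMcv (hunit i) (hunit i₀) (hclose i i₀)
          (hXmem i) (hXmem i₀) (hXmax i) (hXmax i₀) hε0 hΔ0 hr4 hball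
      -- per-index estimate
      have hper : ∀ i, (inner ℝ (q i) (X i) : ℝ) ≤ inner ℝ (q i) (X i₀) + Δ * εΔ := by
        intro i
        have e1 : (inner ℝ (q i) (X i) : ℝ) - inner ℝ (q i) (X i₀) =
            inner ℝ (q i - q i₀) (X i - X i₀) + inner ℝ (q i₀) (X i - X i₀) := by
          rw [inner_sub_left, inner_sub_right, inner_sub_right]; ring
        have e2 : (inner ℝ (q i - q i₀) (X i - X i₀) : ℝ) ≤ Δ * εΔ := by
          calc (inner ℝ (q i - q i₀) (X i - X i₀) : ℝ) ≤ ‖q i - q i₀‖ * ‖X i - X i₀‖ :=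
                real_inner_le_norm _ _
            _ ≤ Δ * εΔ := by
                apply mul_le_mul (hclose i i₀).le _ (norm_nonneg _) hΔ0.le
                rw [← dist_eq_norm]; exact hdist i
        have e3 : (inner ℝ (q i₀) (X i - X i₀) : ℝ) ≤ 0 := by
          rw [inner_sub_right]
          linarith [hXmax i₀ (X i) (hXmem i)]
        linarith
      -- bound on sum of α
      have hαs : ∑ i, α i ≤ 8/7 := by
        have hq70 : ∀ i, (7/8 : ℝ) ≤ inner ℝ (q i₀) (q i) := by
          intro i
          have hns : ‖q i₀ - q i‖^2 = ‖q i₀‖^2 - 2 * inner ℝ (q i₀) (q i) + ‖q i‖^2 :=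
            norm_sub_sq_real _ _
          have h1 : ‖q i₀ - q i‖ < Δ := hclose i₀ i
          have h2 : ‖q i₀ - q i‖^2 ≤ Δ^2 := by
            nlinarith [norm_nonneg (q i₀ - q i)]
          rw [hunit i₀, hunit i] at hns
          nlinarith
        have hip : (inner ℝ (q i₀) p : ℝ) = ∑ i, α i * inner ℝ (q i₀) (q i) := by
          rw [hsum, inner_sum]
          congr 1; funext i; rw [real_inner_smul_right]
        have hip1 : (inner ℝ (q i₀) p : ℝ) ≤ 1 := by
          calc (inner ℝ (q i₀) p : ℝ) ≤ ‖q i₀‖ * ‖p‖ := real_inner_le_norm _ _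
            _ = 1 := by rw [hunit i₀, hp, one_mul]
        have hlb : (7/8 : ℝ) * ∑ i, α i ≤ ∑ i, α i * inner ℝ (q i₀) (q i) := by
          rw [Finset.mul_sum]
          apply Finset.sum_le_sum
          intro i _
          have := hq70 i
          nlinarith [(hα i).le]
        linarith
      -- put together
      have hfinal : (inner ℝ p x : ℝ) ≤ inner ℝ p (X i₀) + Δ * εΔ * ∑ i, α i := by
        have hpx : (inner ℝ p x : ℝ) = ∑ i, α i * inner ℝ (q i) x := by
          rw [hsum, sum_inner]
          congr 1; funext i; rw [real_inner_smul_left]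
        have hpX : (inner ℝ p (X i₀) : ℝ) = ∑ i, α i * inner ℝ (q i) (X i₀) := by
          rw [hsum, sum_inner]
          congr 1; funext i; rw [real_inner_smul_left]
        rw [hpx, hpX, Finset.mul_sum]
        rw [← Finset.sum_add_distrib]
        apply Finset.sum_le_sum
        intro i _
        have hxi : (inner ℝ (q i) x : ℝ) ≤ suppF (q i) M := hx _ (hqC i)
        have hsup : suppF (q i) M ≤ inner ℝ (q i) (X i) := suppF_le hMne (hXmax i)
        have := hper i
        nlinarith [(hα i).le]
      have hXs : (inner ℝ p (X i₀) : ℝ) ≤ suppF p M := le_suppF hMco (hXmem i₀)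
      have : Δ * εΔ * ∑ i, α i ≤ Δ * εΔ * (8/7) := by
        apply mul_le_mul_of_nonneg_left hαs (by positivity)
      calc (inner ℝ p x : ℝ) ≤ inner ℝ p (X i₀) + Δ * εΔ * ∑ i, α i := hfinal
        _ ≤ suppF p M + Δ * εΔ * (8/7) := by linarith
        _ = suppF p M + c := by
            show suppF p M + Δ * εΔ * (8/7) = suppF p M + 8/7 * εΔ * Δ
            ring
  -- projection: infDist to M
  have hproj : ∀ x ∈ polyApprox C M, Metric.infDist x M ≤ c := by
    intro x hx
    obtain ⟨m, hmM, hmd⟩ := hMco.exists_infDist_eq_dist hMne x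
    have hobt : ∀ w ∈ M, (inner ℝ (x - m) (w - m) : ℝ) ≤ 0 := by
      have hiInf : ‖x - m‖ = ⨅ w : M, ‖x - ↑w‖ := by
        rw [← dist_eq_norm, ← hmd, Metric.infDist_eq_iInf]
        simp only [dist_eq_norm]
      exact (norm_eq_iInf_iff_real_inner_le_zero hMcv hmM).mp hiInf
    rcases eq_or_ne x m with h | h
    · rw [hmd, h, dist_self]; exact hc0
    · have hv : x - m ≠ 0 := sub_ne_zero.mpr h
      set u := ‖x - m‖⁻¹ • (x - m) with hu
      have hun : ‖u‖ = 1 := norm_smul_inv_norm hv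
      have hsupu : suppF u M ≤ inner ℝ u m := by
        apply suppF_le hMne
        intro y hy
        have h1 : (inner ℝ u (y - m) : ℝ) ≤ 0 := by
          rw [hu, real_inner_smul_left]
          exact mul_nonpos_of_nonneg_of_nonpos (by positivity) (hobt y hy)
        rw [inner_sub_right] at h1
        linarith
      have hcl := claim x hx u hun
      have hux : (inner ℝ u (x - m) : ℝ) = ‖x - m‖ := by
        rw [hu, real_inner_smul_left, real_inner_self_eq_norm_sq, sq,
          inv_mul_cancel_left₀ (norm_ne_zero_iff.mpr hv)]
      rw [inner_sub_right] at hux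
      rw [hmd, dist_eq_norm, ← hux]
      linarith
  -- assembly
  have hsubA : A ⊆ polyApprox C A := fun a ha p _ => le_suppF hA ha
  have hsubB : B ⊆ polyApprox C B := fun b hb p _ => le_suppF hB hb
  have hMS : M ⊆ polyApprox C A + polyApprox C B := by
    rw [hM]; exact Set.add_subset_add hsubA hsubB
  have hST : polyApprox C A + polyApprox C B ⊆ polyApprox C M := by
    intro z hz
    rw [Set.mem_add] at hz
    obtain ⟨a, ha, b, hb, rfl⟩ := hz
    intro p hp
    have h1 := ha p hp
    have h2 := hb p hp
    have h3 := suppF_add (p := p) hA hB hAne hBne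
    rw [inner_add_right]
    rw [hM]
    linarith
  apply Metric.hausdorffDist_le_of_infDist hc0
  · intro z hz
    rw [Metric.infDist_zero_of_mem (hST hz)]
    exact hc0
  · intro z hz
    calc Metric.infDist z (polyApprox C A + polyApprox C B) ≤ Metric.infDist z M :=
          Metric.infDist_le_infDist_of_subset hMS hMne
      _ ≤ c := hproj z hz
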